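/- Let H be a Hilbert space, T₂ : H → H firmly nonexpansive, and C : H → H β-cocoercive. For ε ∈ (0,1) and γ ∈ (0, 2βε), let ᾱ := 1/(2−ε) and T := I − T₂ + T₁∘(2T₂ − I − γC∘T₂) with T₁ firmly nonexpansive. Then for all z, w ∈ H: ‖Tz − Tw‖² ≤ ‖z−w‖² − ((1−ᾱ)/ᾱ)‖(I−T)z − (I−T)w‖² − γ(2β − γ/ε)‖C(T₂z) − C(T₂w)‖². -/

import Mathlib

open scoped InnerProductSpace



theorem aux_ineq {H : Type*} [NormedAddCommGroup H] [InnerProductSpace ℝ H]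
    (a b c d : H) (β γ ε : ℝ)
    (hε : 0 < ε) (hε1 : ε < 1) (hγ : 0 < γ)
    (h1 : ‖b‖ ^ 2 ≤ ⟪b, a⟫_ℝ)
    (h2 : ‖c‖ ^ 2 ≤ ⟪c, (2:ℝ) • b - a - γ • d⟫_ℝ)
    (h3 : β * ‖d‖ ^ 2 ≤ ⟪d, b⟫_ℝ) :
    ‖a - b + c‖ ^ 2 ≤ ‖a‖ ^ 2 - (1 - ε) * ‖b - c‖ ^ 2
      - γ * (2 * β - γ / ε) * ‖d‖ ^ 2 := by
  have key : (0:ℝ) ≤ ‖ε • (b - c) - γ • d‖ ^ 2 := sq_nonneg _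
  simp only [← real_inner_self_eq_norm_sq] at *
  simp only [inner_sub_left, inner_sub_right, inner_add_left, inner_add_right,
    real_inner_smul_left, real_inner_smul_right, real_inner_comm b a,
    real_inner_comm c a, real_inner_comm c b, real_inner_comm d c,
    real_inner_comm d b, real_inner_comm d a] at *
  have h3' : 2 * γ * (β * ⟪d,d⟫_ℝ) ≤ 2 * γ * ⟪d,b⟫_ℝ := by nlinarith
  have key' : 0 ≤ ε * ⟪b,b⟫_ℝ - 2*ε*⟪c,b⟫_ℝ + ε*⟪c,c⟫_ℝ - 2*γ*⟪d,b⟫_ℝ + 2*γ*⟪d,c⟫_ℝ + γ^2/ε * ⟪d,d⟫_ℝ := by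
    have heq : ε * ⟪b,b⟫_ℝ - 2*ε*⟪c,b⟫_ℝ + ε*⟪c,c⟫_ℝ - 2*γ*⟪d,b⟫_ℝ + 2*γ*⟪d,c⟫_ℝ + γ^2/ε * ⟪d,d⟫_ℝ
        = (ε * (ε * (⟪b, b⟫_ℝ - ⟪c, b⟫_ℝ) - ε * (⟪c, b⟫_ℝ - ⟪c, c⟫_ℝ)) - ε * (γ * ⟪d, b⟫_ℝ - γ * ⟪d, c⟫_ℝ) -
      (γ * (ε * (⟪d, b⟫_ℝ - ⟪d, c⟫_ℝ)) - γ * (γ * ⟪d, d⟫_ℝ))) / ε := by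
      field_simp; ring
    rw [heq]
    exact div_nonneg key hε.le
  have hgoal : γ * (2 * β - γ / ε) * ⟪d,d⟫_ℝ = 2*γ*(β*⟪d,d⟫_ℝ) - γ^2/ε * ⟪d,d⟫_ℝ := by
    field_simp
  nlinarith [h1, h2, h3', key', hgoal]

/-- Strengthened averagedness inequality: for `ε ∈ (0,1)`, `γ ∈ (0, 2βε)` and
`ᾱ = 1/(2-ε)`, the operator `T = I - T₂ + T₁∘(2T₂ - I - γC∘T₂)` satisfies a
contraction-type inequality with an extra cocoercivity term. -/
theorem three_operator_averaged_strengthened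
    {H : Type*} [NormedAddCommGroup H] [InnerProductSpace ℝ H] [CompleteSpace H]
    (T₁ T₂ : H → H) (C : H → H) (β γ ε : ℝ)
    (hβ : 0 < β) (hε : ε ∈ Set.Ioo (0 : ℝ) 1) (hγ : γ ∈ Set.Ioo 0 (2 * β * ε))
    (hT₁ : ∀ x y, ‖T₁ x - T₁ y‖ ^ 2 ≤ ⟪T₁ x - T₁ y, x - y⟫_ℝ)
    (hT₂ : ∀ x y, ‖T₂ x - T₂ y‖ ^ 2 ≤ ⟪T₂ x - T₂ y, x - y⟫_ℝ)
    (hC : ∀ x y, β * ‖C x - C y‖ ^ 2 ≤ ⟪C x - C y, x - y⟫_ℝ)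
    (T : H → H)
    (hT : ∀ z, T z = z - T₂ z + T₁ ((2 : ℝ) • T₂ z - z - γ • C (T₂ z)))
    (α : ℝ) (hα : α = 1 / (2 - ε)) :
    ∀ z w : H, ‖T z - T w‖ ^ 2 ≤
      ‖z - w‖ ^ 2 - ((1 - α) / α) * ‖(z - T z) - (w - T w)‖ ^ 2
        - γ * (2 * β - γ / ε) * ‖C (T₂ z) - C (T₂ w)‖ ^ 2 := by
  intro z w
  obtain ⟨hε0, hε1⟩ := hε
  set u := (2 : ℝ) • T₂ z - z - γ • C (T₂ z) with hu
  set v := (2 : ℝ) • T₂ w - w - γ • C (T₂ w) with hv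
  set a := z - w
  set b := T₂ z - T₂ w
  set c := T₁ u - T₁ v
  set d := C (T₂ z) - C (T₂ w)
  have hαε : (1 - α) / α = 1 - ε := by
    have h2ε : (2:ℝ) - ε ≠ 0 := by linarith
    rw [hα]; field_simp; ring
  have hTz : T z - T w = a - b + c := by
    rw [hT z, hT w]; simp only [a, b, c]; abel
  have hI : (z - T z) - (w - T w) = b - c := by
    rw [hT z, hT w]; simp only [b, c]; abel
  have huv : u - v = (2:ℝ) • b - a - γ • d := by
    simp only [hu, hv, a, b, d, smul_sub]; abel
  have h1 : ‖b‖ ^ 2 ≤ ⟪b, a⟫_ℝ := hT₂ z w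
  have h2 : ‖c‖ ^ 2 ≤ ⟪c, (2:ℝ) • b - a - γ • d⟫_ℝ := by
    rw [← huv]; exact hT₁ u v
  have h3 : β * ‖d‖ ^ 2 ≤ ⟪d, b⟫_ℝ := hC (T₂ z) (T₂ w)
  rw [hTz, hI, hαε]
  exact aux_ineq a b c d β γ ε hε0 hε1 hγ.1 h1 h2 h3
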